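/- Let n = 2m+1 be odd, μ an integer not divisible by n, and λ = exp(2πi/n). Then for every k = 1, …, n−1, the quantity (2/μ)·(cos(2πkμ/n) − 1) · c + λ^{−k}(1 − λ^k)²·s_k = 0, where c := −(2μ/n)·∑_{r=1}^{n−1} sin²(πr/n)·s_r and s_k := (τ/(n sin²(πk/n)))·(1 − cos(2πkμ/n)) for any τ ∈ ℂ. -/

import Mathlib

lemma cos_sum_zero (n : ℕ) (hn : 0 < n) (μ : ℤ) (hμ : ¬ (n : ℤ) ∣ μ) :
    ∑ r ∈ Finset.range n, Complex.cos (2 * (Real.pi : ℂ) * r * μ / n) = 0 := by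
  have hnc : (n : ℂ) ≠ 0 := Nat.cast_ne_zero.mpr hn.ne'
  set x : ℂ := Complex.exp (2 * Real.pi * Complex.I * μ / n) with hx
  have hx0 : x ≠ 0 := Complex.exp_ne_zero _
  have hx1 : x ≠ 1 := by
    rw [hx]
    intro h
    rw [Complex.exp_eq_one_iff] at h
    obtain ⟨q, hq⟩ := h
    apply hμ
    have hπ : (Real.pi : ℂ) ≠ 0 := by exact_mod_cast Real.pi_ne_zero
    have h2 : (μ : ℂ) = (q * n : ℤ) := by
      push_cast
      field_simp at hq
      have := hq
      have h2πI : (2 : ℂ) * Real.pi * Complex.I ≠ 0 := by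
        simp [hπ, Complex.I_ne_zero]
      -- hq : 2 * π * I * μ = q * (2 * π * I) * n
      apply mul_left_cancel₀ h2πI
      linear_combination (2 * (Real.pi : ℂ) * Complex.I) * hq
    have : μ = q * n := by exact_mod_cast h2
    exact ⟨q, by linarith⟩
  have hinv1 : x⁻¹ ≠ 1 := fun h => hx1 (inv_eq_one.mp h)
  have hxn : x ^ n = 1 := by
    rw [hx, ← Complex.exp_nat_mul]
    have : (n : ℂ) * (2 * Real.pi * Complex.I * μ / n) = μ * (2 * Real.pi * Complex.I) := by
      field_simp
    rw [this, Complex.exp_int_mul_two_pi_mul_I]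
  have hxninv : (x⁻¹) ^ n = 1 := by
    rw [inv_pow, hxn, inv_one]
  have key : ∀ r : ℕ, Complex.cos (2 * (Real.pi : ℂ) * r * μ / n)
      = (x ^ r + x⁻¹ ^ r) / 2 := by
    intro r
    have h1 : (2 * (Real.pi : ℂ) * r * μ / n) * Complex.I
        = r * (2 * Real.pi * Complex.I * μ / n) := by ring
    have h2 : (-(2 * (Real.pi : ℂ) * r * μ / n)) * Complex.I
        = r * (-(2 * Real.pi * Complex.I * μ / n)) := by ring
    rw [Complex.cos, h1, h2, Complex.exp_nat_mul, Complex.exp_nat_mul, Complex.exp_neg, ← hx]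
  simp only [key]
  rw [← Finset.sum_div, Finset.sum_add_distrib, geom_sum_eq hx1, geom_sum_eq hinv1,
    hxn, hxninv]
  simp



/-- Let `n = 2m+1` be odd, `μ` an integer not divisible by `n`,
`λ = exp(2πi/n)`, `τ ∈ ℂ`. With
`s_k := (τ/(n sin²(πk/n)))·(1 - cos(2πkμ/n))` and
`c := -(2μ/n)·∑_{r=1}^{n-1} sin²(πr/n)·s_r`, one has for all `k = 1, …, n-1`:
`(2/μ)·(cos(2πkμ/n) - 1)·c + λ^{-k}(1-λ^k)²·s_k = 0`. -/
theorem trace_values_solve_system (m : ℕ) (hm : 1 ≤ m) (n : ℕ) (hn : n = 2 * m + 1)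
    (μ : ℤ) (hμ : ¬ (n : ℤ) ∣ μ) (τ : ℂ)
    (lam : ℂ) (hlam : lam = Complex.exp (2 * Real.pi * Complex.I / n))
    (s : ℕ → ℂ)
    (hs : ∀ k, s k = τ / (n * Complex.sin ((Real.pi : ℂ) * k / n) ^ 2)
      * (1 - Complex.cos (2 * (Real.pi : ℂ) * k * μ / n)))
    (c : ℂ)
    (hc : c = -(2 * (μ : ℂ) / n)
      * ∑ r ∈ Finset.Icc 1 (n - 1), Complex.sin ((Real.pi : ℂ) * r / n) ^ 2 * s r) :
    ∀ k : ℕ, 1 ≤ k → k ≤ n - 1 →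
      (2 / (μ : ℂ)) * (Complex.cos (2 * (Real.pi : ℂ) * k * μ / n) - 1) * c
        + lam ^ (-(k : ℤ)) * (1 - lam ^ k) ^ 2 * s k = 0 := by
  have hn0 : 0 < n := by omega
  have hnc : (n : ℂ) ≠ 0 := Nat.cast_ne_zero.mpr hn0.ne'
  have hμ0 : (μ : ℂ) ≠ 0 := by
    intro h
    exact hμ (by rw [show μ = 0 by exact_mod_cast h]; exact dvd_zero _)
  have hπ : (Real.pi : ℂ) ≠ 0 := by exact_mod_cast Real.pi_ne_zero
  -- sin nonvanishing
  have hsin : ∀ r : ℕ, 1 ≤ r → r ≤ n - 1 → Complex.sin ((Real.pi : ℂ) * r / n) ≠ 0 := by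
    intro r hr1 hr2 h
    rw [Complex.sin_eq_zero_iff] at h
    obtain ⟨q, hq⟩ := h
    have : (r : ℂ) = (q * n : ℤ) := by
      push_cast
      field_simp at hq
      apply mul_left_cancel₀ hπ
      linear_combination (Real.pi : ℂ) * hq
    have hz : (r : ℤ) = q * n := by exact_mod_cast this
    have : (n : ℤ) ∣ (r : ℤ) := ⟨q, by linarith⟩
    have : n ∣ r := by exact_mod_cast this
    have := Nat.le_of_dvd (by omega) this
    omega
  -- sum over Icc of cosines is -1
  have hcos0 : Complex.cos (2 * (Real.pi : ℂ) * (0 : ℕ) * μ / n) = 1 := by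
    norm_num
  have hIcc : Finset.Icc 1 (n - 1) = Finset.Ico 1 n := by
    rw [← Finset.Ico_add_one_right_eq_Icc]
    congr 1
    omega
  have hsplit : (Complex.cos (2 * (Real.pi : ℂ) * (0 : ℕ) * μ / n))
      + ∑ r ∈ Finset.Ico 1 n, Complex.cos (2 * (Real.pi : ℂ) * r * μ / n)
      = ∑ r ∈ Finset.range n, Complex.cos (2 * (Real.pi : ℂ) * r * μ / n) := by
    rw [Finset.range_eq_Ico,
      ← Finset.sum_Ico_consecutive (fun r : ℕ => Complex.cos (2 * (Real.pi : ℂ) * r * μ / n))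
        (Nat.zero_le 1) hn0]
    congr 1
    simp
  have hcosSum : ∑ r ∈ Finset.Icc 1 (n - 1), Complex.cos (2 * (Real.pi : ℂ) * r * μ / n)
      = -1 := by
    rw [hIcc]
    have h0 := cos_sum_zero n hn0 μ hμ
    rw [← hsplit, hcos0] at h0
    linear_combination h0
  have hS : ∑ r ∈ Finset.Icc 1 (n - 1), Complex.sin ((Real.pi : ℂ) * r / n) ^ 2 * s r = τ := by
    have hterm : ∀ r ∈ Finset.Icc 1 (n - 1),
        Complex.sin ((Real.pi : ℂ) * r / n) ^ 2 * s r
          = τ / n - τ / n * Complex.cos (2 * (Real.pi : ℂ) * r * μ / n) := by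
      intro r hr
      simp only [Finset.mem_Icc] at hr
      have hsr := hsin r hr.1 hr.2
      rw [hs r]
      field_simp
    rw [Finset.sum_congr rfl hterm, Finset.sum_sub_distrib, ← Finset.mul_sum, hcosSum,
      Finset.sum_const, Nat.card_Icc]
    have hcard : (n - 1 + 1 - 1 : ℕ) = n - 1 := by omega
    rw [hcard, nsmul_eq_mul]
    have hcast : ((n - 1 : ℕ) : ℂ) = (n : ℂ) - 1 := by
      have : (1:ℕ) ≤ n := hn0
      push_cast [this]
      ring
    rw [hcast]
    field_simp
    ring
  have hcval : c = -(2 * (μ : ℂ) / n) * τ := by rw [hc, hS]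
  intro k hk1 hk2
  have hsk := hsin k hk1 hk2
  have hy : lam ^ k = Complex.exp ((k : ℂ) * (2 * Real.pi * Complex.I / n)) := by
    rw [hlam, ← Complex.exp_nat_mul]
  have hy0 : lam ^ k ≠ 0 := by rw [hy]; exact Complex.exp_ne_zero _
  have hzpow : lam ^ (-(k : ℤ)) = (lam ^ k)⁻¹ := by
    rw [zpow_neg, zpow_natCast]
  have hcos2 : lam ^ k + (lam ^ k)⁻¹ = 2 * Complex.cos (2 * (Real.pi : ℂ) * k / n) := by
    rw [hy, ← Complex.exp_neg, Complex.cos]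
    have h1 : (2 * (Real.pi : ℂ) * k / n) * Complex.I
        = (k : ℂ) * (2 * Real.pi * Complex.I / n) := by ring
    have h2 : (-(2 * (Real.pi : ℂ) * k / n)) * Complex.I
        = -((k : ℂ) * (2 * Real.pi * Complex.I / n)) := by ring
    rw [h1, h2]
    ring
  have hlamid : lam ^ (-(k : ℤ)) * (1 - lam ^ k) ^ 2
      = -4 * Complex.sin ((Real.pi : ℂ) * k / n) ^ 2 := by
    rw [hzpow]
    have expand : (lam ^ k)⁻¹ * (1 - lam ^ k) ^ 2 = (lam ^ k + (lam ^ k)⁻¹) - 2 := by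
      field_simp
      ring
    rw [expand, hcos2]
    have hdouble : (2 : ℂ) * (Real.pi : ℂ) * k / n = 2 * ((Real.pi : ℂ) * k / n) := by ring
    rw [hdouble, Complex.cos_two_mul]
    have hpc := Complex.sin_sq_add_cos_sq ((Real.pi : ℂ) * k / n)
    linear_combination 4 * hpc
  rw [hlamid, hs k, hcval]
  field_simp
  ring
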